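/- Let R be a commutative ring, M and N R-modules, and f a polynomial law from M to N that is homogeneous of degree d. Then for every integer n with 0 ≤ n ≤ d and all elements x, v ∈ M, the n-th directional derivative satisfies (∇_v^n f)(x) = (∇_x^{d−n} f)(v), where both sides are evaluated over R. -/

import Mathlib

/-!
STATEMENT 7: Let R be a commutative ring, M and N R-modules, and f a polynomial law
from M to N that is homogeneous of degree d.  Then for every integer n with
0 ≤ n ≤ d and all elements x, v ∈ M, the n-th directional derivative satisfies
(∇_v^n f)(x) = (∇_x^{d−n} f)(v), where both sides are evaluated over R.
-/

open TensorProduct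

universe u

/-- A polynomial law (in the sense of Roby) from `M` to `N`. -/
structure PolyLaw (R : Type u) [CommRing R] (M N : Type u)
    [AddCommGroup M] [Module R M] [AddCommGroup N] [Module R N] : Type (u + 1) where
  toFun : ∀ (S : Type u) [CommRing S] [Algebra R S], S ⊗[R] M → S ⊗[R] N
  isCompat : ∀ (S S' : Type u) [CommRing S] [Algebra R S] [CommRing S'] [Algebra R S']
      (φ : S →ₐ[R] S') (x : S ⊗[R] M),
      LinearMap.rTensor N φ.toLinearMap (toFun S x) =
        toFun S' (LinearMap.rTensor M φ.toLinearMap x)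

/-- Homogeneity of degree `d` of a polynomial law. -/
def PolyLaw.IsHomogeneous {R : Type u} [CommRing R] {M N : Type u}
    [AddCommGroup M] [Module R M] [AddCommGroup N] [Module R N]
    (d : ℕ) (f : PolyLaw R M N) : Prop :=
  ∀ (S : Type u) [CommRing S] [Algebra R S] (s : S) (x : S ⊗[R] M),
    f.toFun S (s • x) = s ^ d • f.toFun S x

/-- The `n`-th directional derivative of `f` in the direction `v`, evaluated over `R`
at `x ∈ M`: the coefficient of `t^n` in `f_{R[t]}(x + v ⊗ t) ∈ N ⊗ R[t]`. -/
noncomputable def PolyLaw.dirDeriv {R : Type u} [CommRing R] {M N : Type u}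
    [AddCommGroup M] [Module R M] [AddCommGroup N] [Module R N]
    (f : PolyLaw R M N) (n : ℕ) (v x : M) : N :=
  TensorProduct.lid R N
    (LinearMap.rTensor N (Polynomial.lcoeff R n)
      (f.toFun (Polynomial R)
        ((1 : Polynomial R) ⊗ₜ[R] x + (Polynomial.X : Polynomial R) ⊗ₜ[R] v)))

lemma toLaurent_coeff {R : Type u} [CommRing R] (p : Polynomial R) (k : ℕ) :
    (Polynomial.toLaurent p).coeff ((k : ℤ)) = p.coeff k := by
  rw [LaurentPolynomial.coeff_toLaurent]
  exact Finsupp.mapDomain_apply Nat.castEmbedding.injective p.toFinsupp.coeff k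

theorem stmt_7 (R : Type u) [CommRing R] (M N : Type u)
    [AddCommGroup M] [Module R M] [AddCommGroup N] [Module R N]
    (d : ℕ) (f : PolyLaw R M N) (hf : f.IsHomogeneous d)
    (n : ℕ) (hn : n ≤ d) (x v : M) :
    f.dirDeriv n v x = f.dirDeriv (d - n) x v := by
  classical
  set S := LaurentPolynomial R with hS
  -- the algebra maps R[X] → R[T;T⁻¹]
  set ι : Polynomial R →ₐ[R] S := Polynomial.toLaurentAlg with hι
  set φ : Polynomial R →ₐ[R] S :=
    (LaurentPolynomial.invert (R := R)).toAlgHom.comp Polynomial.toLaurentAlg with hφ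
  have hιX : ι Polynomial.X = LaurentPolynomial.T 1 := by
    rw [hι, Polynomial.toLaurentAlg_apply, Polynomial.toLaurent_X]
  have hφX : φ Polynomial.X = LaurentPolynomial.T (-1) := by
    rw [hφ, AlgHom.comp_apply, Polynomial.toLaurentAlg_apply, Polynomial.toLaurent_X]
    exact LaurentPolynomial.invert_T 1
  set P : Polynomial R ⊗[R] N :=
    f.toFun (Polynomial R)
      ((1 : Polynomial R) ⊗ₜ[R] x + (Polynomial.X : Polynomial R) ⊗ₜ[R] v) with hP
  set Q : Polynomial R ⊗[R] N :=
    f.toFun (Polynomial R)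
      ((Polynomial.X : Polynomial R) ⊗ₜ[R] x + (1 : Polynomial R) ⊗ₜ[R] v) with hQ
  -- key equality in S ⊗ N
  have key : LinearMap.rTensor N ι.toLinearMap Q =
      (LaurentPolynomial.T (d : ℤ) : S) • LinearMap.rTensor N φ.toLinearMap P := by
    have h1 : LinearMap.rTensor N ι.toLinearMap Q =
        f.toFun S ((LaurentPolynomial.T 1 : S) ⊗ₜ[R] x + (1 : S) ⊗ₜ[R] v) := by
      rw [hQ, f.isCompat]
      simp [LinearMap.rTensor_tmul, hιX, map_one]
    have h2 : LinearMap.rTensor N φ.toLinearMap P =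
        f.toFun S ((1 : S) ⊗ₜ[R] x + (LaurentPolynomial.T (-1) : S) ⊗ₜ[R] v) := by
      rw [hP, f.isCompat]
      simp [LinearMap.rTensor_tmul, hφX, map_one]
    rw [h1, h2]
    have h3 : (LaurentPolynomial.T 1 : S) •
        ((1 : S) ⊗ₜ[R] x + (LaurentPolynomial.T (-1) : S) ⊗ₜ[R] v) =
        (LaurentPolynomial.T 1 : S) ⊗ₜ[R] x + (1 : S) ⊗ₜ[R] v := by
      rw [smul_add, smul_tmul', smul_tmul', smul_eq_mul, smul_eq_mul, mul_one,
        ← LaurentPolynomial.T_add]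
      norm_num [LaurentPolynomial.T_zero]
    calc f.toFun S ((LaurentPolynomial.T 1 : S) ⊗ₜ[R] x + (1 : S) ⊗ₜ[R] v)
        = f.toFun S ((LaurentPolynomial.T 1 : S) •
            ((1 : S) ⊗ₜ[R] x + (LaurentPolynomial.T (-1) : S) ⊗ₜ[R] v)) := by rw [h3]
      _ = (LaurentPolynomial.T 1 : S) ^ d •
            f.toFun S ((1 : S) ⊗ₜ[R] x + (LaurentPolynomial.T (-1) : S) ⊗ₜ[R] v) := hf S _ _
      _ = (LaurentPolynomial.T (d : ℤ) : S) •
            f.toFun S ((1 : S) ⊗ₜ[R] x + (LaurentPolynomial.T (-1) : S) ⊗ₜ[R] v) := by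
          rw [LaurentPolynomial.T_pow, mul_one]
  -- replace the smul by an rTensor of a multiplication map
  have smul_rTensor : ∀ (a : S) (z : S ⊗[R] N),
      a • z = LinearMap.rTensor N (LinearMap.mulLeft R a) z := by
    intro a z
    induction z using TensorProduct.induction_on with
    | zero => simp
    | tmul s y => rw [smul_tmul', LinearMap.rTensor_tmul, LinearMap.mulLeft_apply, smul_eq_mul]
    | add z₁ z₂ h₁ h₂ => rw [smul_add, map_add, h₁, h₂]
  rw [smul_rTensor, ← LinearMap.rTensor_comp_apply] at key
  -- extract the coefficient at (d - n : ℤ)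
  have key2 : LinearMap.rTensor N
        (((Finsupp.lapply (R := R) ((d - n : ℕ) : ℤ)) ∘ₗ (AddMonoidAlgebra.coeffLinearEquiv (M := ℤ) R).toLinearMap) ∘ₗ ι.toLinearMap) Q =
      LinearMap.rTensor N (((Finsupp.lapply (R := R) ((d - n : ℕ) : ℤ)) ∘ₗ (AddMonoidAlgebra.coeffLinearEquiv (M := ℤ) R).toLinearMap) ∘ₗ
        ((LinearMap.mulLeft R (LaurentPolynomial.T (d : ℤ) : S)) ∘ₗ φ.toLinearMap)) P := by
    rw [LinearMap.rTensor_comp, LinearMap.rTensor_comp, LinearMap.comp_apply,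
      LinearMap.comp_apply]
    rw [key]
    simp only [LinearMap.rTensor_comp, LinearMap.comp_apply]
  -- identify both composite linear maps with coefficient maps of polynomials
  have hcast : ((d - n : ℕ) : ℤ) = (d : ℤ) - (n : ℤ) := by
    exact_mod_cast Int.ofNat_sub hn
  have hleft : ((Finsupp.lapply (R := R) ((d - n : ℕ) : ℤ)) ∘ₗ (AddMonoidAlgebra.coeffLinearEquiv (M := ℤ) R).toLinearMap) ∘ₗ ι.toLinearMap =
      Polynomial.lcoeff R (d - n) := by
    apply LinearMap.ext
    intro p
    exact toLaurent_coeff p (d - n)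
  have hright : ((Finsupp.lapply (R := R) ((d - n : ℕ) : ℤ)) ∘ₗ (AddMonoidAlgebra.coeffLinearEquiv (M := ℤ) R).toLinearMap) ∘ₗ
      ((LinearMap.mulLeft R (LaurentPolynomial.T (d : ℤ) : S)) ∘ₗ φ.toLinearMap) =
      Polynomial.lcoeff R n := by
    apply LinearMap.ext
    intro p
    show ((LaurentPolynomial.T (d : ℤ) : S) * φ.toLinearMap p).coeff ((d - n : ℕ) : ℤ) = p.coeff n
    have hφp : φ.toLinearMap p = LaurentPolynomial.invert (Polynomial.toLaurent p) := rfl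
    rw [hφp, hcast,
      show (LaurentPolynomial.T (d : ℤ) : S) = AddMonoidAlgebra.single (d : ℤ) (1 : R) from rfl,
      AddMonoidAlgebra.coeff_single_mul_apply, one_mul, LaurentPolynomial.invert_apply]
    have harg : -(-(d : ℤ) + ((d : ℤ) - (n : ℤ))) = (n : ℤ) := by ring
    rw [harg]
    exact toLaurent_coeff p n
  rw [hleft, hright] at key2
  -- conclude
  unfold PolyLaw.dirDeriv
  rw [show (1 : Polynomial R) ⊗ₜ[R] v + (Polynomial.X : Polynomial R) ⊗ₜ[R] x =
      (Polynomial.X : Polynomial R) ⊗ₜ[R] x + (1 : Polynomial R) ⊗ₜ[R] v from add_comm _ _]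
  rw [← hP, ← hQ, key2]
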